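/- Let ν be a probability measure, T a measure-preserving ergodic transformation for a measure equivalent to ν×ν_F, and suppose d_r(x) → 1 as r ↓ 0 for (ν×ν_F)-a.e. point, where each d_r is measurable. Then for any sequence r_n ↓ 0 (uniformly over points, with r_n(i) < r_0 for n ≥ n_0), for a.e. (i,V): lim_{k→∞} (1/k) #{n ∈ {1,…,k} : |d_{r_n(i)}(T^n(i,V)) − 1| < ε} = 1 for every ε > 0. -/

import Mathlib

open MeasureTheory Filter Topology
open scoped Classical
open MeasureTheory Filter Topology Set MeasurableSpace
open scoped ENNReal

/-- Constraint sets in Baire space: sequences bounded by `g` on coordinates `< k`. -/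
def capTset (g : ℕ → ℕ) (k : ℕ) : Set (ℕ → ℕ) := {β | ∀ i < k, β i ≤ g i}

lemma capTset_zero (g : ℕ → ℕ) : capTset g 0 = univ := by
  ext β; simp [capTset]

lemma capTset_update_succ (g : ℕ → ℕ) (k N : ℕ) :
    capTset (Function.update g k N) (k+1) = capTset g k ∩ {β | β k ≤ N} := by
  ext β
  constructor
  · intro h
    refine ⟨fun i hi => ?_, ?_⟩
    · have := h i (hi.trans (Nat.lt_succ_self k))
      rwa [Function.update_of_ne hi.ne] at this
    · have := h k (Nat.lt_succ_self k)
      rwa [Function.update_self] at this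
  · rintro ⟨h1, h2⟩ i hi
    rcases Nat.lt_succ_iff_lt_or_eq.1 hi with hi' | rfl
    · rw [Function.update_of_ne hi'.ne]; exact h1 i hi'
    · rwa [Function.update_self]

lemma capTset_antitone (g : ℕ → ℕ) : Antitone (capTset g) := by
  intro k l hkl β hβ i hi
  exact hβ i (hi.trans_le hkl)

lemma capTset_congr {g g' : ℕ → ℕ} {k : ℕ} (h : ∀ i < k, g i = g' i) :
    capTset g k = capTset g' k := by
  ext β; constructor <;> intro hβ i hi
  · rw [← h i hi]; exact hβ i hi
  · rw [h i hi]; exact hβ i hi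

/-- **Capacitability**: a finite measure on a nice space is inner regular by compacts
on analytic sets (as an outer measure). -/
theorem MeasureTheory.AnalyticSet.exists_isCompact_measure_le {X : Type*} [TopologicalSpace X] [T2Space X]
    [FirstCountableTopology X] [MeasurableSpace X] [OpensMeasurableSpace X]
    {A : Set X} (hA : AnalyticSet A) (ν : Measure X) [IsFiniteMeasure ν]
    {c : ℝ≥0∞} (hc : c < ν A) :
    ∃ K, IsCompact K ∧ K ⊆ A ∧ c ≤ ν K := by
  rw [AnalyticSet] at hA
  rcases hA with rfl | ⟨f, hf, rfl⟩
  · simp at hc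
  -- step lemma
  have step : ∀ (k : ℕ) (g : ℕ → ℕ), c < ν (f '' capTset g k) →
      ∃ N, c < ν (f '' capTset (Function.update g k N) (k+1)) := by
    intro k g hg
    have hmono : Monotone (fun N => f '' (capTset g k ∩ {β | β k ≤ N})) := by
      intro N M hNM
      exact image_mono (inter_subset_inter_right _ (fun β hβ => le_trans hβ hNM))
    have hU0 : ⋃ N, (capTset g k ∩ {β | β k ≤ N}) = capTset g k := by
      ext β
      constructor
      · rintro ⟨s, ⟨N, rfl⟩, h, _⟩
        exact h
      · intro h
        exact mem_iUnion.2 ⟨β k, h, le_refl (β k)⟩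
    have hUnion : ⋃ N, f '' (capTset g k ∩ {β | β k ≤ N}) = f '' capTset g k := by
      rw [← image_iUnion, hU0]
    have := (hmono.directed_le).measure_iUnion (μ := ν)
    rw [hUnion] at this
    rw [this] at hg
    obtain ⟨N, hN⟩ := lt_iSup_iff.1 hg
    exact ⟨N, by rwa [capTset_update_succ]⟩
  have base : c < ν (f '' capTset (fun _ => 0) 0) := by
    rwa [capTset_zero, image_univ]
  -- recursive construction
  let F : ∀ k : ℕ, {g : ℕ → ℕ // c < ν (f '' capTset g k)} := fun k =>
    Nat.rec (motive := fun k => {g : ℕ → ℕ // c < ν (f '' capTset g k)})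
      ⟨fun _ => 0, base⟩
      (fun k ih => ⟨Function.update ih.1 k (step k ih.1 ih.2).choose,
        (step k ih.1 ih.2).choose_spec⟩) k
  have hFsucc : ∀ k i, i ≠ k → (F (k+1)).1 i = (F k).1 i := by
    intro k i hik
    exact Function.update_of_ne hik _ _
  set σ : ℕ → ℕ := fun i => (F (i+1)).1 i with hσdef
  have hσ : ∀ k, ∀ i < k, (F k).1 i = σ i := by
    intro k
    induction k with
    | zero => intro i hi; omega
    | succ k ih =>
      intro i hi
      rcases Nat.lt_succ_iff_lt_or_eq.1 hi with hi' | rfl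
      · rw [hFsucc k i hi'.ne]; exact ih i hi'
      · rfl
  have hc' : ∀ k, c < ν (f '' capTset σ k) := by
    intro k
    have := (F k).2
    rwa [capTset_congr (g' := σ) (hσ k)] at this
  -- the compact set
  set K₀ : Set (ℕ → ℕ) := univ.pi (fun i => Iic (σ i)) with hK₀def
  have hK₀ : IsCompact K₀ := isCompact_univ_pi (fun i => (Set.finite_Iic (σ i)).isCompact)
  refine ⟨f '' K₀, hK₀.image hf, image_subset_range _ _, ?_⟩
  -- the intersection of closures is inside f '' K₀
  have inter_sub : (⋂ k, closure (f '' capTset σ k)) ⊆ f '' K₀ := by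
    intro x hx
    obtain ⟨V, hV⟩ := (𝓝 x).exists_antitone_basis
    have hch : ∀ k, ∃ β, β ∈ capTset σ k ∧ f β ∈ V k := by
      intro k
      have hxk : x ∈ closure (f '' capTset σ k) := mem_iInter.1 hx k
      rw [mem_closure_iff_nhds] at hxk
      obtain ⟨y, hy1, hy2⟩ := hxk (V k) (hV.1.mem_of_mem trivial)
      obtain ⟨β, hβ, rfl⟩ := hy2
      exact ⟨β, hβ, hy1⟩
    choose β hβT hβV using hch
    have hfβ : Tendsto (f ∘ β) atTop (𝓝 x) := by
      rw [hV.1.tendsto_right_iff]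
      intro i _
      filter_upwards [eventually_ge_atTop i] with k hk
      exact hV.2 hk (hβV k)
    set b : ℕ → ℕ := fun i => max (σ i) ((Finset.range (i+1)).sup (fun k => β k i)) with hbdef
    have hβmem : ∀ k, β k ∈ univ.pi (fun i => Iic (b i)) := by
      intro k
      rw [mem_univ_pi]
      intro i
      simp only [mem_Iic]
      rcases le_or_gt k i with h | h
      · exact le_max_of_le_right (Finset.le_sup (f := fun k => β k i)
          (Finset.mem_range.2 (Nat.lt_succ_of_le h)))
      · exact le_max_of_le_left (hβT k i h)
    have hcpt : IsCompact (univ.pi (fun i => Iic (b i))) :=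
      isCompact_univ_pi (fun i => (Set.finite_Iic (b i)).isCompact)
    obtain ⟨γ, hγ, φ, hφ, hφt⟩ := hcpt.tendsto_subseq hβmem
    have hγK₀ : γ ∈ K₀ := by
      rw [hK₀def, mem_univ_pi]
      intro i
      simp only [mem_Iic]
      have h1 : Tendsto (fun j => (β ∘ φ) j i) atTop (𝓝 (γ i)) :=
        ((continuous_apply i).continuousAt).tendsto.comp hφt
      rw [nhds_discrete, tendsto_pure] at h1
      have h2 : ∀ᶠ j in atTop, i < φ j :=
        (eventually_gt_atTop i).mono fun j hj => hj.trans_le hφ.le_apply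
      obtain ⟨j, hj1, hj2⟩ := (h1.and h2).exists
      rw [← hj1]
      exact hβT (φ j) i hj2
    have hfγ : f γ = x := by
      have h1 : Tendsto (f ∘ β ∘ φ) atTop (𝓝 (f γ)) := (hf.tendsto γ).comp hφt
      have h2 : Tendsto (f ∘ β ∘ φ) atTop (𝓝 x) := hfβ.comp hφ.tendsto_atTop
      exact tendsto_nhds_unique h1 h2
    exact ⟨γ, hγK₀, hfγ⟩
  have hmono : Antitone (fun k => closure (f '' capTset σ k)) := by
    intro k l hkl
    exact closure_mono (image_mono (capTset_antitone σ hkl))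
  have hlim := tendsto_measure_iInter_atTop (μ := ν)
    (fun k => (isClosed_closure.measurableSet).nullMeasurableSet) hmono
    ⟨0, measure_ne_top ν _⟩
  have hle : c ≤ ν (⋂ k, closure (f '' capTset σ k)) :=
    ge_of_tendsto hlim (Eventually.of_forall fun k =>
      ((hc' k).le.trans (measure_mono subset_closure)))
  exact hle.trans (measure_mono inter_sub)

/-- Decreasing analytic sets whose compact subsets of the intersection are null
have measure tending to zero. -/
theorem shrink_analytic {X : Type*} [TopologicalSpace X] [T2Space X]
    [FirstCountableTopology X] [MeasurableSpace X] [OpensMeasurableSpace X]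
    {A : ℕ → Set X} (hA : ∀ n, AnalyticSet (A n)) (hmono : Antitone A)
    (ν : Measure X) [IsFiniteMeasure ν]
    (hnull : ∀ K, IsCompact K → (∀ n, K ⊆ A n) → ν K = 0) :
    Tendsto (fun n => ν (A n)) atTop (𝓝 0) := by
  have hanti : Antitone (fun n => ν (A n)) := fun a b h => measure_mono (hmono h)
  have htend : Tendsto (fun n => ν (A n)) atTop (𝓝 (⨅ n, ν (A n))) := tendsto_atTop_iInf hanti
  suffices h0 : (⨅ n, ν (A n)) = 0 by rwa [h0] at htend
  set L := ⨅ n, ν (A n) with hLdef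
  have key : ∀ κ : ℝ≥0∞, 0 < κ → κ ≠ ⊤ → L ≤ κ := by
    intro κ hκ hκtop
    by_cases hz : ∃ n, ν (A n) = 0
    · obtain ⟨n, hn⟩ := hz
      exact le_trans (iInf_le _ n) (by rw [hn]; exact zero_le)
    push_neg at hz
    set κs : ℕ → ℝ≥0∞ := fun n => κ / 2 ^ (n + 1) with hκsdef
    have hκspos : ∀ n, κs n ≠ 0 := by
      intro n
      simp only [hκsdef, ne_eq, ENNReal.div_eq_zero_iff, not_or]
      exact ⟨hκ.ne', ENNReal.pow_ne_top (by norm_num)⟩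
    have hκssum : ∀ n, (∑ j ∈ Finset.range (n+1), κs j) ≤ κ := by
      intro n
      have h1 : (∑ j ∈ Finset.range (n+1), κs j) ≤ ∑' j, κs j :=
        ENNReal.sum_le_tsum _
      have h2 : (∑' j : ℕ, κs j) = κ := by
        have : ∀ j : ℕ, κs j = κ * 2⁻¹ ^ (j+1) := by
          intro j
          simp only [hκsdef]
          rw [div_eq_mul_inv, ENNReal.inv_pow]
        simp_rw [this]
        rw [ENNReal.tsum_mul_left]
        have : (∑' j : ℕ, (2⁻¹ : ℝ≥0∞) ^ (j+1)) = 1 := by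
          simp_rw [pow_succ']
          rw [ENNReal.tsum_mul_left, ENNReal.tsum_geometric,
            ENNReal.one_sub_inv_two]
          exact ENNReal.mul_inv_cancel (by norm_num) (by norm_num)
        rw [this, mul_one]
      rw [← h2]
      exact h1
    -- choose compacts
    have hcap : ∀ n, ∃ K, IsCompact K ∧ K ⊆ A n ∧ ν (A n) - κs n ≤ ν K := by
      intro n
      have hlt : ν (A n) - κs n < ν (A n) :=
        ENNReal.sub_lt_self (measure_ne_top ν _) (hz n) (hκspos n)
      exact (hA n).exists_isCompact_measure_le ν hlt
    choose K hKcpt hKsub hKmeas using hcap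
    have hdiff : ∀ n, ν (A n \ K n) ≤ κs n := by
      intro n
      have hmeasK : MeasurableSet (K n) := (hKcpt n).isClosed.measurableSet
      have h1 : ν (A n ∩ K n) + ν (A n \ K n) = ν (A n) := measure_inter_add_diff _ hmeasK
      rw [inter_eq_self_of_subset_right (hKsub n)] at h1
      have h2 : ν (A n) ≤ ν (K n) + κs n := tsub_le_iff_right.1 (hKmeas n)
      have h3 : ν (K n) + ν (A n \ K n) ≤ ν (K n) + κs n := by rw [h1]; exact h2
      exact (ENNReal.add_le_add_iff_left (measure_ne_top ν (K n))).1 h3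
    set Lt : ℕ → Set X := fun n => ⋂ j ∈ Finset.range (n+1), K j with hLtdef
    have hLtclosed : ∀ n, IsClosed (Lt n) :=
      fun n => isClosed_biInter (fun j _ => (hKcpt j).isClosed)
    have hLtcpt : ∀ n, IsCompact (Lt n) := by
      intro n
      refine (hKcpt 0).of_isClosed_subset (hLtclosed n) ?_
      exact biInter_subset_of_mem (Finset.mem_range.2 (Nat.succ_pos n))
    have hLtanti : Antitone Lt := by
      intro a b hab x hx
      simp only [hLtdef, mem_iInter] at hx ⊢
      intro j hj
      exact hx j (Finset.mem_range.2
        (lt_of_lt_of_le (Finset.mem_range.1 hj) (Nat.succ_le_succ hab)))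
    have hLtsub : ∀ n, Lt n ⊆ K n :=
      fun n => biInter_subset_of_mem (Finset.mem_range.2 (Nat.lt_succ_self n))
    have hbound : ∀ n, ν (A n) ≤ ν (Lt n) + κ := by
      intro n
      have h1 : ν (A n ∩ Lt n) + ν (A n \ Lt n) = ν (A n) :=
        measure_inter_add_diff _ (hLtclosed n).measurableSet
      have h2 : A n \ Lt n ⊆ ⋃ j ∈ Finset.range (n+1), (A j \ K j) := by
        intro x hx
        obtain ⟨hxA, hxL⟩ := hx
        simp only [hLtdef, mem_iInter, not_forall] at hxL
        obtain ⟨j, hj, hxj⟩ := hxL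
        exact mem_biUnion hj ⟨hmono (Nat.lt_succ_iff.1 (Finset.mem_range.1 hj)) hxA, hxj⟩
      have h3 : ν (A n \ Lt n) ≤ ∑ j ∈ Finset.range (n+1), κs j := by
        refine le_trans (measure_mono h2) ?_
        refine le_trans (measure_biUnion_finset_le _ _) ?_
        exact Finset.sum_le_sum (fun j _ => hdiff j)
      calc ν (A n) = ν (A n ∩ Lt n) + ν (A n \ Lt n) := h1.symm
        _ ≤ ν (Lt n) + κ :=
            add_le_add (measure_mono inter_subset_right) (h3.trans (hκssum n))
    have hLcpt : IsCompact (⋂ n, Lt n) :=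
      (hLtcpt 0).of_isClosed_subset (isClosed_iInter hLtclosed) (iInter_subset _ 0)
    have hLnull : ν (⋂ n, Lt n) = 0 := by
      refine hnull _ hLcpt (fun n => ?_)
      exact le_trans (le_trans (iInter_subset _ n) (hLtsub n)) (hKsub n)
    have htendL : Tendsto (fun n => ν (Lt n)) atTop (𝓝 0) := by
      have := tendsto_measure_iInter_atTop (μ := ν)
        (fun n => (hLtclosed n).measurableSet.nullMeasurableSet) hLtanti
        ⟨0, measure_ne_top ν _⟩
      rwa [hLnull] at this
    have htendLκ : Tendsto (fun n => ν (Lt n) + κ) atTop (𝓝 (0 + κ)) :=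
      htendL.add tendsto_const_nhds
    have : L ≤ 0 + κ :=
      ge_of_tendsto htendLκ (Eventually.of_forall (fun n => (iInf_le _ n).trans (hbound n)))
    rwa [zero_add] at this
  refine le_antisymm ?_ zero_le
  refine ENNReal.le_of_forall_pos_le_add (fun ε hε _ => ?_)
  rw [zero_add]
  exact key ε (by exact_mod_cast hε) ENNReal.coe_ne_top


lemma countablyGenerated_iSup {β : Type*} {m : ℕ → MeasurableSpace β}
    (h : ∀ n, @CountablyGenerated β (m n)) : @CountablyGenerated β (⨆ n, m n) := by
  choose b hbc hbe using fun n => (h n).isCountablyGenerated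
  refine @CountablyGenerated.mk β (⨆ n, m n) ⟨⋃ n, b n, countable_iUnion hbc, ?_⟩
  apply le_antisymm
  · refine iSup_le fun n => ?_
    rw [hbe n]
    exact generateFrom_mono (subset_iUnion b n)
  · refine generateFrom_le fun t ht => ?_
    obtain ⟨n, htn⟩ := mem_iUnion.1 ht
    have h1 : MeasurableSet[m n] t := (hbe n) ▸ measurableSet_generateFrom htn
    exact (le_iSup m n) t h1

lemma prod_mono_right {α β : Type*} (mα : MeasurableSpace α) {m₀ m₁ : MeasurableSpace β}
    (h : m₀ ≤ m₁) :
    @Prod.instMeasurableSpace α β mα m₀ ≤ @Prod.instMeasurableSpace α β mα m₁ :=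
  sup_le_sup le_rfl (comap_mono h)

/-- Any set measurable for a product σ-algebra is measurable for the product with a
countably generated sub-σ-algebra on the second factor. -/
theorem exists_countablyGenerated_snd {α β : Type*} [mα : MeasurableSpace α]
    {mβ : MeasurableSpace β} {D : Set (α × β)}
    (hD : MeasurableSet[@Prod.instMeasurableSpace α β mα mβ] D) :
    ∃ m₀ : MeasurableSpace β, m₀ ≤ mβ ∧ @CountablyGenerated β m₀ ∧
      MeasurableSet[@Prod.instMeasurableSpace α β mα m₀] D := by
  rw [← generateFrom_prod] at hD
  refine generateFrom_induction
    (C := image2 (· ×ˢ ·) { s : Set α | MeasurableSet s } { t : Set β | MeasurableSet t })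
    (p := fun u _ => ∃ m₀ : MeasurableSpace β, m₀ ≤ mβ ∧ @CountablyGenerated β m₀ ∧
      MeasurableSet[@Prod.instMeasurableSpace α β mα m₀] u) ?_ ?_ ?_ ?_ D hD
  · rintro u ⟨s, hs, t, ht, rfl⟩ -
    have hle : generateFrom {t} ≤ mβ := by
      refine generateFrom_le ?_
      rintro v hv
      rw [mem_singleton_iff] at hv
      subst hv
      exact ht
    refine ⟨generateFrom {t}, hle, ?_, ?_⟩
    · exact @CountablyGenerated.mk β (generateFrom {t}) ⟨{t}, countable_singleton t, rfl⟩
    · show MeasurableSet[mα.comap Prod.fst ⊔ (generateFrom {t}).comap Prod.snd] (s ×ˢ t)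
      rw [Set.prod_eq]
      have hs' : MeasurableSet[mα.comap Prod.fst] (Prod.fst ⁻¹' s : Set (α × β)) := ⟨s, hs, rfl⟩
      have ht' : MeasurableSet[(generateFrom {t}).comap Prod.snd]
          (Prod.snd ⁻¹' t : Set (α × β)) := ⟨t, measurableSet_generateFrom rfl, rfl⟩
      exact ((le_sup_left (a := mα.comap (Prod.fst : α × β → α))
          (b := (generateFrom {t}).comap (Prod.snd : α × β → β))) _ hs').inter
        ((le_sup_right (a := mα.comap (Prod.fst : α × β → α))
          (b := (generateFrom {t}).comap (Prod.snd : α × β → β))) _ ht')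
  · have hle : generateFrom {(∅ : Set β)} ≤ mβ := by
      refine generateFrom_le ?_
      rintro v hv
      rw [mem_singleton_iff] at hv
      subst hv
      exact measurableSet_empty mβ
    refine ⟨generateFrom {(∅ : Set β)}, hle, ?_, ?_⟩
    · exact @CountablyGenerated.mk β (generateFrom {∅}) ⟨{∅}, countable_singleton _, rfl⟩
    · exact @measurableSet_empty _ (@Prod.instMeasurableSpace α β mα (generateFrom {∅}))
  · rintro t ht ⟨m₀, hle, hcg, hmeas⟩
    exact ⟨m₀, hle, hcg, hmeas.compl⟩
  · intro s hs hp
    choose m₀ hle hcg hmeas using hp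
    refine ⟨⨆ n, m₀ n, iSup_le hle, countablyGenerated_iSup hcg, ?_⟩
    exact MeasurableSet.iUnion fun n => prod_mono_right mα (le_iSup m₀ n) _ (hmeas n)

lemma measurableSet_of_le {β : Type*} {m m' : MeasurableSpace β} (h : m ≤ m') {s : Set β}
    (hs : MeasurableSet[m] s) : MeasurableSet[m'] s := h s hs

/-- A product-measurable subset of `ℝ × β` factors through the Cantor space. -/
theorem exists_cantor_factorization {β : Type*} {mβ : MeasurableSpace β}
    {D : Set (ℝ × β)} (hD : MeasurableSet D) :
    ∃ (π : β → ℕ → Bool) (D' : Set (ℝ × (ℕ → Bool))),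
      Measurable π ∧ MeasurableSet D' ∧ (Prod.map (id : ℝ → ℝ) π) ⁻¹' D' = D := by
  obtain ⟨m₁, hm₁le, hm₁cg, hDm₁⟩ := exists_countablyGenerated_snd hD
  set π : β → ℕ → Bool := @mapNatBool β m₁ hm₁cg with hπdef
  have hπm₁ : @Measurable β (ℕ → Bool) m₁ _ π := @measurable_mapNatBool β m₁ hm₁cg
  have hπ : @Measurable β (ℕ → Bool) mβ _ π := hπm₁.mono hm₁le le_rfl
  have hcomap : m₁ = MeasurableSpace.comap π inferInstance := by
    refine le_antisymm ?_ hπm₁.comap_le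
    conv_lhs => rw [← @generateFrom_natGeneratingSequence β m₁ hm₁cg]
    refine generateFrom_le ?_
    rintro s ⟨n, rfl⟩
    refine ⟨(fun y : ℕ → Bool => y n) ⁻¹' {true},
      (measurable_pi_apply n) (measurableSet_singleton true), ?_⟩
    ext x
    simp only [mem_preimage, mem_singleton_iff, hπdef, mapNatBool, decide_eq_true_eq]
  have hfsteq : (Prod.fst ∘ (Prod.map (id : ℝ → ℝ) π) : ℝ × β → ℝ) = Prod.fst := rfl
  have hsndeq : (Prod.snd ∘ (Prod.map (id : ℝ → ℝ) π) : ℝ × β → ℕ → Bool) = π ∘ Prod.snd := rfl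
  have hprodeq : (@Prod.instMeasurableSpace ℝ β _ m₁) =
      MeasurableSpace.comap (Prod.map (id : ℝ → ℝ) π) inferInstance := by
    show (MeasurableSpace.comap Prod.fst (inferInstance : MeasurableSpace ℝ)) ⊔
        m₁.comap Prod.snd =
      MeasurableSpace.comap (Prod.map (id : ℝ → ℝ) π)
        ((MeasurableSpace.comap Prod.fst (inferInstance : MeasurableSpace ℝ)) ⊔
          (MeasurableSpace.comap Prod.snd (inferInstance : MeasurableSpace (ℕ → Bool))))
    conv_rhs => rw [MeasurableSpace.comap_sup, MeasurableSpace.comap_comp,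
      MeasurableSpace.comap_comp, hfsteq, hsndeq, ← MeasurableSpace.comap_comp]
    rw [← hcomap]
  rw [hprodeq] at hDm₁
  obtain ⟨D', hD', hD'pre⟩ := MeasurableSpace.measurableSet_comap.1 hDm₁
  exact ⟨π, D', hπ, hD', hD'pre⟩

/-- **Continuous-parameter Egorov-type theorem.** If for a.e. `x` the "bad" set of radii
avoids an interval `(0, t(x))`, then off a set of measure `< κ` one can choose a uniform `t`. -/
theorem egorov_cont {β : Type*} {mβ : MeasurableSpace β} (μ : Measure β) [IsFiniteMeasure μ]
    {D : Set (ℝ × β)} (hD : MeasurableSet D)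
    (h0 : ∀ᵐ x ∂μ, ∃ t, 0 < t ∧ ∀ ρ ∈ Set.Ioo (0:ℝ) t, (ρ, x) ∉ D)
    {κ : ℝ≥0∞} (hκ : 0 < κ) :
    ∃ (Γ : Set β) (t : ℝ), MeasurableSet Γ ∧ μ Γᶜ < κ ∧ 0 < t ∧
      ∀ x ∈ Γ, ∀ ρ ∈ Set.Ioo (0:ℝ) t, (ρ, x) ∉ D := by
  classical
  obtain ⟨π, D', hπ, hD', hD'pre⟩ := exists_cantor_factorization hD
  have hNnull : μ {x | ¬ ∃ t, 0 < t ∧ ∀ ρ ∈ Set.Ioo (0:ℝ) t, (ρ, x) ∉ D} = 0 := ae_iff.1 h0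
  set ν : Measure (ℕ → Bool) := μ.map π with hνdef
  have hνfin : IsFiniteMeasure ν := by
    constructor
    rw [hνdef, Measure.map_apply hπ MeasurableSet.univ]
    exact measure_lt_top μ _
  set C' : ℕ → Set (ℕ → Bool) :=
    fun n => Prod.snd '' (D' ∩ (Set.Ioo (0:ℝ) ((n:ℝ)+1)⁻¹ ×ˢ (univ : Set (ℕ → Bool)))) with hC'def
  have hC'analytic : ∀ n, AnalyticSet (C' n) := fun n =>
    (hD'.inter (measurableSet_Ioo.prod MeasurableSet.univ)).analyticSet_image measurable_snd
  have hC'anti : Antitone C' := by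
    intro a b hab
    refine image_mono (inter_subset_inter_right _ (prod_mono_left (Ioo_subset_Ioo le_rfl ?_)))
    have hab' : (a:ℝ) + 1 ≤ (b:ℝ) + 1 := by
      have : (a:ℝ) ≤ (b:ℝ) := Nat.cast_le.2 hab
      linarith
    exact inv_anti₀ (by positivity) hab'
  have hpre : ∀ n, π ⁻¹' (C' n) = {x | ∃ ρ ∈ Set.Ioo (0:ℝ) ((n:ℝ)+1)⁻¹, (ρ, x) ∈ D} := by
    intro n
    ext x
    simp only [mem_preimage, hC'def, mem_image, mem_setOf_eq]
    constructor
    · rintro ⟨p, ⟨hpD', hpIoo, -⟩, hpsnd⟩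
      refine ⟨p.1, hpIoo, ?_⟩
      rw [← hD'pre]
      show Prod.map (id : ℝ → ℝ) π (p.1, x) ∈ D'
      have heq : Prod.map (id : ℝ → ℝ) π (p.1, x) = p := Prod.ext rfl hpsnd.symm
      rw [heq]
      exact hpD'
    · rintro ⟨ρ, hρ, hρD⟩
      rw [← hD'pre] at hρD
      exact ⟨(ρ, π x), ⟨hρD, hρ, trivial⟩, rfl⟩
  have hnull : ∀ K, IsCompact K → (∀ n, K ⊆ C' n) → ν K = 0 := by
    intro K hK hKsub
    rw [hνdef, Measure.map_apply hπ hK.isClosed.measurableSet]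
    refine measure_mono_null ?_ hNnull
    intro x hx
    rw [mem_setOf_eq]
    rintro ⟨t, ht, hgood⟩
    obtain ⟨n, hn⟩ := exists_nat_one_div_lt ht
    have hxn : x ∈ π ⁻¹' (C' n) := mem_preimage.2 (hKsub n hx)
    rw [hpre n] at hxn
    obtain ⟨ρ, hρ, hρD⟩ := hxn
    refine hgood ρ ⟨hρ.1, ?_⟩ hρD
    calc ρ < ((n:ℝ)+1)⁻¹ := hρ.2
      _ = 1 / ((n:ℝ)+1) := (one_div _).symm
      _ < t := hn
  have htend : Tendsto (fun n => ν (C' n)) atTop (𝓝 0) :=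
    shrink_analytic hC'analytic hC'anti ν hnull
  obtain ⟨n, hn⟩ := (htend.eventually (gt_mem_nhds hκ)).exists
  refine ⟨(π ⁻¹' (toMeasurable ν (C' n)))ᶜ, ((n:ℝ)+1)⁻¹,
    (hπ (measurableSet_toMeasurable ν _)).compl, ?_, by positivity, ?_⟩
  · rw [compl_compl]
    have h1 : μ (π ⁻¹' (toMeasurable ν (C' n))) = ν (toMeasurable ν (C' n)) := by
      rw [hνdef, Measure.map_apply hπ (measurableSet_toMeasurable _ _)]
    rw [h1, measure_toMeasurable]
    exact hn
  · intro x hx ρ hρ hρD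
    apply hx
    refine mem_preimage.2 (subset_toMeasurable ν (C' n) ?_)
    show π x ∈ C' n
    have hx' : x ∈ π ⁻¹' (C' n) := by
      rw [hpre n]
      exact ⟨ρ, hρ, hρD⟩
    exact hx'


section MaximalErgodic

variable {Ω : Type*} [MeasurableSpace Ω] (μ : Measure Ω) [IsProbabilityMeasure μ]
  {T : Ω → Ω} {g : Ω → ℝ}

/-- **Maximal ergodic theorem** (Garsia's proof). -/
theorem maximal_ergodic (hT : MeasurePreserving T μ μ) (hgm : Measurable g)
    (hgi : Integrable g μ) :
    0 ≤ ∫ x in {x | ∃ k, 1 ≤ k ∧ 0 < birkhoffSum T g k x}, g x ∂μ := by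
  classical
  have hSm : ∀ k, Measurable (birkhoffSum T g k) := by
    intro k
    unfold birkhoffSum
    exact Finset.measurable_sum _ (fun i _ => hgm.comp (hT.measurable.iterate i))
  have hSi : ∀ k, Integrable (birkhoffSum T g k) μ := by
    intro k
    unfold birkhoffSum
    exact integrable_finset_sum _ (fun i _ => ((hT.iterate i).integrable_comp hgm.aestronglyMeasurable).2 hgi)
  set P : ℕ → Ω → ℝ := fun n => Nat.rec (motive := fun _ => Ω → ℝ) (fun _ => 0)
    (fun n Pn => fun x => max (Pn x) (birkhoffSum T g (n+1) x)) n with hPdef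
  have hP0 : P 0 = fun _ => 0 := rfl
  have hPsucc : ∀ n, P (n+1) = fun x => max (P n x) (birkhoffSum T g (n+1) x) := fun n => rfl
  have hPsucc' : ∀ n x, P (n+1) x = max (P n x) (birkhoffSum T g (n+1) x) := fun n x => rfl
  have hPnonneg : ∀ n x, 0 ≤ P n x := by
    intro n
    induction n with
    | zero => intro x; exact le_refl 0
    | succ n ih => intro x; rw [hPsucc']; exact le_max_of_le_left (ih x)
  have hPmono : ∀ n x, P n x ≤ P (n+1) x := by
    intro n x; rw [hPsucc']; exact le_max_left _ _
  have hPm : ∀ n, Measurable (P n) := by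
    intro n
    induction n with
    | zero => rw [hP0]; exact measurable_const
    | succ n ih => rw [hPsucc]; exact ih.max (hSm (n+1))
  have hPi : ∀ n, Integrable (P n) μ := by
    intro n
    induction n with
    | zero => rw [hP0]; exact integrable_const 0
    | succ n ih =>
      rw [hPsucc]
      have := ih.sup (hSi (n+1))
      refine this.congr (ae_of_all _ (fun x => ?_))
      simp [Pi.sup_apply]
  set E : ℕ → Set Ω := fun n => {x | 0 < P n x} with hEdef
  have hEmeas : ∀ n, MeasurableSet (E n) := fun n => measurableSet_lt measurable_const (hPm n)
  have hEmono : Monotone E := by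
    intro a b hab x hx
    have h : ∀ m, P a x ≤ P (a + m) x := by
      intro m
      induction m with
      | zero => exact le_refl _
      | succ m ih => exact ih.trans (hPmono (a+m) x)
    have := h (b - a)
    rw [Nat.add_sub_cancel' hab] at this
    exact lt_of_lt_of_le hx this
  have hPattain : ∀ n x, P n x = 0 ∨ ∃ k, 1 ≤ k ∧ k ≤ n ∧ P n x = birkhoffSum T g k x := by
    intro n x
    induction n with
    | zero => left; rfl
    | succ n ih =>
      rw [hPsucc']
      rcases max_cases (P n x) (birkhoffSum T g (n+1) x) with ⟨hmax, -⟩ | ⟨hmax, -⟩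
      · rcases ih with h0 | ⟨k, hk1, hkn, hkeq⟩
        · left; rw [hmax, h0]
        · right; exact ⟨k, hk1, hkn.trans (Nat.le_succ n), by rw [hmax, hkeq]⟩
      · right; exact ⟨n+1, Nat.succ_le_succ (Nat.zero_le n), le_refl _, hmax⟩
  have hPge : ∀ n k, 1 ≤ k → k ≤ n → ∀ x, birkhoffSum T g k x ≤ P n x := by
    intro n
    induction n with
    | zero => intro k h1 h0; omega
    | succ n ih =>
      intro k h1 hk x
      rcases Nat.lt_succ_iff_lt_or_eq.1 (Nat.lt_succ_of_le hk) with h | rfl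
      · have := ih k h1 (by omega) x
        exact this.trans (hPmono n x)
      · rw [hPsucc']; exact le_max_right _ _
  have key : ∀ n x, x ∈ E n → P n x ≤ g x + P n (T x) := by
    intro n x hx
    rw [hEdef, mem_setOf_eq] at hx
    rcases hPattain n x with h0 | ⟨k, hk1, hkn, hkeq⟩
    · rw [h0] at hx; exact absurd hx (lt_irrefl 0)
    rcases k with _ | j
    · omega
    rw [hkeq, birkhoffSum_succ' T g j x]
    have hj : birkhoffSum T g j (T x) ≤ P n (T x) := by
      rcases Nat.eq_zero_or_pos j with rfl | hjpos
      · rw [birkhoffSum_zero]; exact hPnonneg n (T x)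
      · exact hPge n j hjpos (by omega) (T x)
    linarith
  have hzero_off : ∀ n x, x ∉ E n → P n x = 0 := by
    intro n x hx
    rw [hEdef, mem_setOf_eq, not_lt] at hx
    exact le_antisymm hx (hPnonneg n x)
  -- ∫_{E n} g ≥ 0
  have hstep : ∀ n, 0 ≤ ∫ x in E n, g x ∂μ := by
    intro n
    have hPT : Integrable (fun x => P n (T x)) μ := (hT.integrable_comp (hPm n).aestronglyMeasurable).2 (hPi n)
    have h1 : ∫ x in E n, (P n x - P n (T x)) ∂μ ≤ ∫ x in E n, g x ∂μ := by
      refine setIntegral_mono_on (((hPi n).sub hPT).integrableOn) (hgi.integrableOn)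
        (hEmeas n) ?_
      intro x hx
      have := key n x hx
      linarith
    have h2 : ∫ x in E n, (P n x - P n (T x)) ∂μ
        = ∫ x in E n, P n x ∂μ - ∫ x in E n, P n (T x) ∂μ :=
      integral_sub ((hPi n).integrableOn) (hPT.integrableOn)
    have h3 : ∫ x in E n, P n x ∂μ = ∫ x, P n x ∂μ := by
      have hsplit := integral_add_compl (hEmeas n) (hPi n)
      have hzero : ∫ x in (E n)ᶜ, P n x ∂μ = 0 := by
        refine setIntegral_eq_zero_of_forall_eq_zero ?_
        intro x hx
        exact hzero_off n x hx
      linarith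
    have h4 : ∫ x in E n, P n (T x) ∂μ ≤ ∫ x, P n (T x) ∂μ :=
      setIntegral_le_integral hPT (ae_of_all _ (fun x => hPnonneg n (T x)))
    have h5 : ∫ x, P n (T x) ∂μ = ∫ x, P n x ∂μ := by
      rw [← integral_map hT.measurable.aemeasurable (hPm n).aestronglyMeasurable, hT.map_eq]
    linarith
  have htend := tendsto_setIntegral_of_monotone hEmeas hEmono (hgi.integrableOn)
  have hE : ⋃ n, E n = {x | ∃ k, 1 ≤ k ∧ 0 < birkhoffSum T g k x} := by
    ext x
    simp only [mem_iUnion, hEdef, mem_setOf_eq]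
    constructor
    · rintro ⟨n, hn⟩
      rcases hPattain n x with h0 | ⟨k, hk1, hkn, hkeq⟩
      · rw [h0] at hn; exact absurd hn (lt_irrefl 0)
      · exact ⟨k, hk1, hkeq ▸ hn⟩
    · rintro ⟨k, hk1, hk⟩
      exact ⟨k, lt_of_lt_of_le hk (hPge k k hk1 (le_refl k) x)⟩
  rw [hE] at htend
  exact ge_of_tendsto htend (Eventually.of_forall hstep)

end MaximalErgodic

/-- Almost surely, the asymptotic frequency of visits to a set `A` does not exceed
any `c` larger than the measure of `A`. -/
theorem ergodic_avoid {Ω : Type*} [MeasurableSpace Ω] {μ : Measure Ω} [IsProbabilityMeasure μ]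
    {T : Ω → Ω} (hT : Ergodic T μ) {A : Set Ω} (hA : MeasurableSet A) {c : ℝ}
    (hc : (μ A).toReal < c) :
    ∀ᵐ x ∂μ, ∀ᶠ k : ℕ in atTop,
      (((Finset.range k).filter (fun n => T^[n] x ∈ A)).card : ℝ) ≤ c * k := by
  classical
  set c₁ : ℝ := ((μ A).toReal + c) / 2 with hc₁def
  have hc₁a : (μ A).toReal < c₁ := by rw [hc₁def]; linarith
  have hc₁b : c₁ < c := by rw [hc₁def]; linarith
  set g : Ω → ℝ := fun x => A.indicator (fun _ => (1:ℝ)) x - c₁ with hgdef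
  have hgm : Measurable g := (measurable_const.indicator hA).sub measurable_const
  have hgi : Integrable g μ := ((integrable_const (1:ℝ)).indicator hA).sub (integrable_const c₁)
  have hgb : ∀ x, |g x| ≤ 1 + |c₁| := by
    intro x
    have h1 : |A.indicator (fun _ => (1:ℝ)) x| ≤ 1 := by
      rw [indicator_apply]; split_ifs <;> simp
    calc |g x| = |A.indicator (fun _ => (1:ℝ)) x + -c₁| := by
          simp only [hgdef, sub_eq_add_neg]
      _ ≤ |A.indicator (fun _ => (1:ℝ)) x| + |-c₁| := abs_add_le _ _
      _ = |A.indicator (fun _ => (1:ℝ)) x| + |c₁| := by rw [abs_neg]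
      _ ≤ 1 + |c₁| := by linarith
  set B : ℝ := 2 * (1 + |c₁|) with hBdef
  have hSm : ∀ k, Measurable (birkhoffSum T g k) := by
    intro k
    unfold birkhoffSum
    exact Finset.measurable_sum _
      (fun i _ => hgm.comp (hT.toMeasurePreserving.measurable.iterate i))
  have hSdiff : ∀ (k : ℕ) (x : Ω), |birkhoffSum T g k (T x) - birkhoffSum T g k x| ≤ B := by
    intro k x
    rw [birkhoffSum_apply_sub_birkhoffSum]
    calc |g (T^[k] x) - g x| = |g (T^[k] x) + -(g x)| := by rw [sub_eq_add_neg]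
      _ ≤ |g (T^[k] x)| + |-(g x)| := abs_add_le _ _
      _ = |g (T^[k] x)| + |g x| := by rw [abs_neg]
      _ ≤ B := by rw [hBdef]; linarith [hgb (T^[k] x), hgb x]
  set Estar : Set Ω := ⋃ (q : ℚ), ⋃ (_ : 0 < q), ⋂ (K : ℕ), ⋃ (k : ℕ), ⋃ (_ : K ≤ k),
      {x | (q:ℝ) * k < birkhoffSum T g k x} with hEstardef
  have hmem : ∀ x, x ∈ Estar ↔
      ∃ q : ℚ, 0 < q ∧ ∀ K : ℕ, ∃ k, K ≤ k ∧ (q:ℝ) * k < birkhoffSum T g k x := by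
    intro x
    simp only [hEstardef, mem_iUnion, mem_iInter, mem_setOf_eq, exists_prop]
  have hmeas : MeasurableSet Estar := by
    rw [hEstardef]
    refine MeasurableSet.iUnion (fun q => MeasurableSet.iUnion (fun _ =>
      MeasurableSet.iInter (fun K => MeasurableSet.iUnion (fun k =>
      MeasurableSet.iUnion (fun _ => ?_)))))
    exact measurableSet_lt measurable_const (hSm k)
  have htrans : ∀ x y : Ω, (∀ k, |birkhoffSum T g k y - birkhoffSum T g k x| ≤ B) →
      (∃ q : ℚ, 0 < q ∧ ∀ K : ℕ, ∃ k, K ≤ k ∧ (q:ℝ) * k < birkhoffSum T g k x) →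
      (∃ q : ℚ, 0 < q ∧ ∀ K : ℕ, ∃ k, K ≤ k ∧ (q:ℝ) * k < birkhoffSum T g k y) := by
    rintro x y hxy ⟨q, hq, hx⟩
    have hq' : (0:ℝ) < (q:ℝ) := by exact_mod_cast hq
    refine ⟨q/2, by positivity, ?_⟩
    intro K
    obtain ⟨K₀, hK₀⟩ := exists_nat_ge (2 * B / (q:ℝ))
    obtain ⟨k, hk1, hk2⟩ := hx (max K K₀)
    refine ⟨k, le_trans (le_max_left _ _) hk1, ?_⟩
    have hkK₀ : (K₀:ℝ) ≤ (k:ℝ) := by exact_mod_cast le_trans (le_max_right _ _) hk1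
    have hBk : B ≤ (q:ℝ)/2 * k := by
      have h1 : 2 * B / (q:ℝ) ≤ (k:ℝ) := hK₀.trans hkK₀
      rw [div_le_iff₀ hq'] at h1
      nlinarith
    have h2 : birkhoffSum T g k x - B ≤ birkhoffSum T g k y := by
      have h3 := (abs_le.1 (hxy k)).1
      linarith
    push_cast
    linarith
  have hinv : T ⁻¹' Estar = Estar := by
    ext x
    rw [mem_preimage, hmem, hmem]
    constructor
    · intro h
      exact htrans (T x) x (fun k => by rw [abs_sub_comm]; exact hSdiff k x) h
    · intro h
      exact htrans x (T x) (fun k => hSdiff k x) h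
  have herg := hT.toPreErgodic.prob_eq_zero_or_one hmeas hinv
  have h0 : μ Estar = 0 := by
    rcases herg with h | h
    · exact h
    · exfalso
      have hE1 : μ Estar = 1 := h
      set Eset : Set Ω := {x | ∃ k, 1 ≤ k ∧ 0 < birkhoffSum T g k x} with hEsetdef
      have hEsetmeas : MeasurableSet Eset := by
        have heq : Eset = ⋃ k, ⋃ (_ : 1 ≤ k), {x | 0 < birkhoffSum T g k x} := by
          ext x
          simp only [hEsetdef, mem_iUnion, mem_setOf_eq, exists_prop]
        rw [heq]
        exact MeasurableSet.iUnion (fun k => MeasurableSet.iUnion (fun _ =>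
          measurableSet_lt measurable_const (hSm k)))
      have hsub : Estar ⊆ Eset := by
        intro x hx
        rw [hmem] at hx
        obtain ⟨q, hq, hx⟩ := hx
        obtain ⟨k, hk1, hk2⟩ := hx 1
        have hq' : (0:ℝ) < (q:ℝ) := by exact_mod_cast hq
        refine ⟨k, hk1, lt_of_le_of_lt ?_ hk2⟩
        positivity
      have hEset1 : μ Eset = 1 := by
        refine le_antisymm prob_le_one ?_
        rw [← hE1]
        exact measure_mono hsub
      have hEsetc : μ Esetᶜ = 0 := by
        rw [measure_compl hEsetmeas (measure_ne_top μ _), hEset1, measure_univ, tsub_self]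
      have hmax := maximal_ergodic μ hT.toMeasurePreserving hgm hgi
      have hfull : ∫ x in Eset, g x ∂μ = ∫ x, g x ∂μ := by
        have hsplit := integral_add_compl hEsetmeas hgi
        have hz : ∫ x in Esetᶜ, g x ∂μ = 0 := setIntegral_measure_zero _ hEsetc
        linarith
      have hint : ∫ x, g x ∂μ = (μ A).toReal - c₁ := by
        rw [hgdef]
        rw [integral_sub ((integrable_const (1:ℝ)).indicator hA) (integrable_const c₁)]
        rw [integral_indicator_const (1:ℝ) hA, integral_const]
        simp [measure_univ]
        rfl
      rw [hfull, hint] at hmax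
      linarith
  have hae : ∀ᵐ x ∂μ, x ∉ Estar := measure_eq_zero_iff_ae_notMem.mp h0
  filter_upwards [hae] with x hx
  rw [hmem] at hx
  push_neg at hx
  obtain ⟨q, hq0, hqlt⟩ := exists_rat_btwn (show (0:ℝ) < c - c₁ by linarith)
  have hq0' : 0 < q := by exact_mod_cast hq0
  obtain ⟨K, hK⟩ := hx q hq0'
  filter_upwards [eventually_ge_atTop K] with k hk
  have h1 : birkhoffSum T g k x ≤ (q:ℝ) * k := hK k hk
  have hScount : birkhoffSum T g k x =
      (((Finset.range k).filter (fun n => T^[n] x ∈ A)).card : ℝ) - c₁ * k := by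
    have hrfl : birkhoffSum T g k x
        = ∑ n ∈ Finset.range k, (A.indicator (fun _ => (1:ℝ)) (T^[n] x) - c₁) := rfl
    rw [hrfl, Finset.sum_sub_distrib, Finset.sum_const, Finset.card_range]
    congr 1
    · simp_rw [indicator_apply]
      rw [Finset.sum_boole]
    · rw [nsmul_eq_mul, mul_comm]
  have hkr : (0:ℝ) ≤ (k:ℝ) := Nat.cast_nonneg k
  have hqc : (q:ℝ) * k ≤ (c - c₁) * k := mul_le_mul_of_nonneg_right hqlt.le hkr
  rw [hScount] at h1
  nlinarith

lemma filter_card_irrel {α : Type*} (s : Finset α) (p : α → Prop) (h1 h2 : DecidablePred p) :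
    (@Finset.filter α p h1 s).card = (@Finset.filter α p h2 s).card := by
  rw [Subsingleton.elim h1 h2]

/-- Let `m` be a probability measure (playing the role of `ν × ν_F`) and
`T` a transformation which is measure-preserving and ergodic for a probability measure `m'`
equivalent to `m`. Suppose `d_r → 1` as `r ↓ 0` at `m`-a.e. point, where
`d : ℝ → Ω → ℝ` is jointly measurable, and let `r_n : Ω → ℝ` be positive and tend to `0`
uniformly over points. Then for `m`-a.e. `ω`, for every `ε > 0`, the set of times
`n ∈ {1,…,k}` with `|d_{r_n(ω)}(T^n ω) − 1| < ε` has asymptotic density one. -/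
theorem stmt_19 {Ω : Type*} [MeasurableSpace Ω]
    (m m' : Measure Ω) [IsProbabilityMeasure m] [IsProbabilityMeasure m']
    (heqv : m ≪ m' ∧ m' ≪ m)
    (T : Ω → Ω) (hT : Ergodic T m')
    (d : ℝ → Ω → ℝ) (hd : Measurable (Function.uncurry d))
    (hconv : ∀ᵐ ω ∂m, Tendsto (fun r => d r ω) (𝓝[>] (0 : ℝ)) (𝓝 1))
    (r : ℕ → Ω → ℝ) (hrpos : ∀ n ω, 0 < r n ω)
    (hrunif : ∀ r0 > (0 : ℝ), ∃ n0 : ℕ, ∀ n ≥ n0, ∀ ω, r n ω < r0) :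
    ∀ᵐ ω ∂m, ∀ ε > (0 : ℝ),
      Tendsto
        (fun k : ℕ => (k : ℝ)⁻¹ *
          ((Finset.Icc 1 k).filter
            (fun n => |d (r n ω) (T^[n] ω) - 1| < ε)).card)
        atTop (𝓝 1) := by
  have hae' : ∀ᵐ ω ∂m', Tendsto (fun ρ => d ρ ω) (𝓝[>] (0:ℝ)) (𝓝 1) := heqv.2.ae_le hconv
  -- Main claim for fixed ε, δ
  have claim : ∀ ε : ℝ, 0 < ε → ∀ δ : ℝ, 0 < δ →
      ∀ᵐ ω ∂m', ∃ C : ℝ, ∀ᶠ k : ℕ in atTop,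
        (((Finset.Icc 1 k).filter
          (fun n => ¬ |d (r n ω) (T^[n] ω) - 1| < ε)).card : ℝ) ≤ δ * k + C := by
    intro ε hε δ hδ
    set D : Set (ℝ × Ω) := {p | ε ≤ |d p.1 p.2 - 1|} with hDdef
    have hDmeas : MeasurableSet D := by
      have hf : Measurable (fun p : ℝ × Ω => |d p.1 p.2 - 1|) :=
        (hd.sub measurable_const).abs
      exact hf measurableSet_Ici
    have h0 : ∀ᵐ x ∂m', ∃ t, 0 < t ∧ ∀ ρ ∈ Set.Ioo (0:ℝ) t, (ρ, x) ∉ D := by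
      filter_upwards [hae'] with x hx
      have hball : ∀ᶠ y in 𝓝 (1:ℝ), |y - 1| < ε := by
        filter_upwards [Metric.ball_mem_nhds (1:ℝ) hε] with y hy
        rwa [Metric.mem_ball, Real.dist_eq] at hy
      have hev : ∀ᶠ ρ in 𝓝[>] (0:ℝ), |d ρ x - 1| < ε := hx.eventually hball
      obtain ⟨u, hu, hsub⟩ := mem_nhdsGT_iff_exists_Ioo_subset.1 hev
      refine ⟨u, hu, fun ρ hρ hmem => ?_⟩
      have h1 : |d ρ x - 1| < ε := hsub hρ
      rw [hDdef, mem_setOf_eq] at hmem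
      exact absurd hmem (not_le.2 h1)
    obtain ⟨Γ, t, hΓmeas, hΓκ, ht, hΓ⟩ :=
      egorov_cont m' hDmeas h0 (κ := ENNReal.ofReal δ) (ENNReal.ofReal_pos.2 hδ)
    have hΓc : (m' Γᶜ).toReal < δ :=
      (ENNReal.lt_ofReal_iff_toReal_lt (measure_ne_top _ _)).1 hΓκ
    obtain ⟨n0, hn0⟩ := hrunif t ht
    set Ac : Set Ω := Γᶜ with hAc
    have hAcmeas : MeasurableSet Ac := hΓmeas.compl
    have hAcval : (m' Ac).toReal < δ := hΓc
    have havoid := ergodic_avoid hT hAcmeas hAcval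
    filter_upwards [havoid] with ω hω
    refine ⟨(n0:ℝ) + 1 + δ, ?_⟩
    have hshift : ∀ᶠ k : ℕ in atTop,
        ((((Finset.range (k+1)).filter (fun n => T^[n] ω ∈ Ac)).card : ℝ)) ≤ δ * ((k:ℝ)+1) := by
      have h1 := (tendsto_add_atTop_nat 1).eventually hω
      filter_upwards [h1] with k hk
      push_cast at hk
      rw [filter_card_irrel (Finset.range (k+1)) (fun n => T^[n] ω ∈ Ac)
        _ (fun a => Classical.propDecidable (T^[a] ω ∈ Ac))]
      exact hk
    filter_upwards [hshift] with k hk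
    have hsubset : (Finset.Icc 1 k).filter (fun n => ¬ |d (r n ω) (T^[n] ω) - 1| < ε) ⊆
        (Finset.range (n0+1)) ∪ ((Finset.range (k+1)).filter (fun n => T^[n] ω ∈ Ac)) := by
      intro n hn
      rw [Finset.mem_filter, Finset.mem_Icc] at hn
      obtain ⟨⟨hn1, hnk⟩, hbad⟩ := hn
      rw [Finset.mem_union, Finset.mem_range, Finset.mem_filter, Finset.mem_range]
      by_cases hcase : n < n0 + 1
      · exact Or.inl hcase
      · refine Or.inr ⟨by omega, ?_⟩
        rw [hAc, mem_compl_iff]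
        intro hmem
        refine hbad ?_
        have hr : r n ω ∈ Set.Ioo (0:ℝ) t := ⟨hrpos n ω, hn0 n (by omega) ω⟩
        have hnotD := hΓ _ hmem _ hr
        rw [hDdef, mem_setOf_eq, not_le] at hnotD
        exact hnotD
    have hcard : (((Finset.Icc 1 k).filter
          (fun n => ¬ |d (r n ω) (T^[n] ω) - 1| < ε)).card : ℝ)
        ≤ ((n0:ℝ) + 1) + (((Finset.range (k+1)).filter (fun n => T^[n] ω ∈ Ac)).card : ℝ) := by
      have h1 := Finset.card_le_card hsubset
      have h2 := Finset.card_union_le (Finset.range (n0+1))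
        ((Finset.range (k+1)).filter (fun n => T^[n] ω ∈ Ac))
      have h3 := h1.trans h2
      rw [Finset.card_range] at h3
      push_cast
      exact_mod_cast h3
    calc (((Finset.Icc 1 k).filter
          (fun n => ¬ |d (r n ω) (T^[n] ω) - 1| < ε)).card : ℝ)
        ≤ ((n0:ℝ) + 1) + (((Finset.range (k+1)).filter (fun n => T^[n] ω ∈ Ac)).card : ℝ) :=
          hcard
      _ ≤ ((n0:ℝ) + 1) + δ * ((k:ℝ)+1) := by linarith
      _ = δ * k + ((n0:ℝ) + 1 + δ) := by ring
  -- countable intersection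
  have hall : ∀ᵐ ω ∂m', ∀ j : ℕ, ∀ i : ℕ, ∃ C : ℝ, ∀ᶠ k : ℕ in atTop,
      (((Finset.Icc 1 k).filter
        (fun n => ¬ |d (r n ω) (T^[n] ω) - 1| < 1/((j:ℝ)+1))).card : ℝ)
        ≤ (1/((i:ℝ)+1)) * k + C := by
    rw [ae_all_iff]
    intro j
    rw [ae_all_iff]
    intro i
    exact claim _ (by positivity) _ (by positivity)
  have hfinal : ∀ᵐ ω ∂m', ∀ ε > (0:ℝ),
      Tendsto (fun k : ℕ => (k : ℝ)⁻¹ *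
        ((Finset.Icc 1 k).filter (fun n => |d (r n ω) (T^[n] ω) - 1| < ε)).card)
        atTop (𝓝 1) := by
    filter_upwards [hall] with ω hω
    intro ε hε
    rw [Metric.tendsto_nhds]
    intro η hη
    obtain ⟨j, hj⟩ := exists_nat_one_div_lt hε
    obtain ⟨i, hi⟩ := exists_nat_one_div_lt (half_pos hη)
    obtain ⟨C, hC⟩ := hω j i
    have hCk : Tendsto (fun k : ℕ => C / (k:ℝ)) atTop (𝓝 0) :=
      tendsto_const_div_atTop_nhds_zero_nat C
    have hCsmall : ∀ᶠ k : ℕ in atTop, C / (k:ℝ) < η/2 :=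
      hCk.eventually (gt_mem_nhds (half_pos hη))
    filter_upwards [hC, hCsmall, eventually_ge_atTop 1] with k hCk' hCk2 hk1
    have hkpos : (0:ℝ) < (k:ℝ) := by exact_mod_cast hk1
    set bε := ((Finset.Icc 1 k).filter
      (fun n => ¬ |d (r n ω) (T^[n] ω) - 1| < ε)).card with hbεdef
    set gε := ((Finset.Icc 1 k).filter
      (fun n => |d (r n ω) (T^[n] ω) - 1| < ε)).card with hgεdef
    have hsum : gε + bε = k := by
      rw [hgεdef, hbεdef, Finset.card_filter_add_card_filter_not, Nat.card_Icc]
      omega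
    have hmono : bε ≤ ((Finset.Icc 1 k).filter
        (fun n => ¬ |d (r n ω) (T^[n] ω) - 1| < 1/((j:ℝ)+1))).card := by
      rw [hbεdef]
      refine Finset.card_le_card (Finset.monotone_filter_right _ ?_)
      intro n _ hbad hlt
      exact hbad (hlt.trans hj)
    have hb : (bε:ℝ) ≤ η/2 * k + C := by
      have h1 : (bε:ℝ) ≤ (1/((i:ℝ)+1)) * k + C := le_trans (by exact_mod_cast hmono) hCk'
      nlinarith [hi, hkpos]
    rw [Real.dist_eq]
    have hgval : (gε:ℝ) = (k:ℝ) - bε := by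
      have : (gε:ℝ) + bε = k := by exact_mod_cast hsum
      linarith
    have habs : |(k:ℝ)⁻¹ * gε - 1| = (k:ℝ)⁻¹ * bε := by
      rw [hgval]
      rw [abs_of_nonpos]
      · field_simp; ring
      · have hble : (bε:ℝ) ≤ k := by
          have : bε ≤ k := by omega
          exact_mod_cast this
        have h2 : (k:ℝ)⁻¹ * ((k:ℝ) - bε) ≤ 1 := by
          rw [inv_mul_le_iff₀ hkpos]
          linarith
        linarith
    rw [habs]
    have h3 : (k:ℝ)⁻¹ * bε ≤ (k:ℝ)⁻¹ * (η/2 * k + C) := by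
      exact mul_le_mul_of_nonneg_left hb (by positivity)
    have hkne : (k:ℝ) ≠ 0 := ne_of_gt hkpos
    have h4 : (k:ℝ)⁻¹ * (η/2 * k + C) = η/2 + C/k := by
      rw [mul_add]
      congr 1
      · rw [mul_comm (η/2) (k:ℝ), inv_mul_cancel_left₀ hkne]
      · rw [inv_mul_eq_div]
    calc (k:ℝ)⁻¹ * bε ≤ η/2 + C/k := by rw [← h4]; exact h3
      _ < η/2 + η/2 := by linarith
      _ = η := by ring
  exact heqv.1.ae_le hfinal
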